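/- For every n ≥ 3, the hypergraph H_n, with vertices V_n = {A_1, …, A_n} (each with domain containing {0, 1, …, n−2}) and hyperedges V_n ∖ {A_i} for 1 ≤ i ≤ n, does not have the local-to-global consistency property for bags: there exists a pairwise consistent collection of bags over the hyperedges of H_n that is not globally consistent. -/

import Mathlib

set_option linter.unusedSectionVars false
set_option maxHeartbeats 1000000


variable {A : Type} [DecidableEq A]

/-- The type of `X`-tuples: functions assigning to each attribute `a ∈ X` an element
of its domain `D a`. -/
def Tup (D : A → Type) (X : Finset A) : Type := ∀ a : X, D a.1

/-- Restriction (projection) of an `X`-tuple to `Z ⊆ X`. -/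
def Tup.restrict {D : A → Type} {X Z : Finset A} (h : Z ⊆ X) (t : Tup D X) : Tup D Z :=
  fun a => t ⟨a.1, h a.2⟩

/-- A bag over `X`: a finitely supported function from `X`-tuples to ℕ. -/
abbrev Bag (D : A → Type) (X : Finset A) : Type := Tup D X →₀ ℕ

/-- The marginal of a bag on `Z ⊆ X`. -/
noncomputable def Bag.marginal {D : A → Type} {X Z : Finset A} (h : Z ⊆ X) (R : Bag D X) :
    Bag D Z := Finsupp.mapDomain (Tup.restrict h) R

/-- Two bags are consistent if a common bag over the union of schemas has them as marginals. -/
def Consistent {D : A → Type} {X Y : Finset A} (R : Bag D X) (S : Bag D Y) : Prop :=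
  ∃ T : Bag D (X ∪ Y),
    Bag.marginal Finset.subset_union_left T = R ∧
    Bag.marginal Finset.subset_union_right T = S

/-- Global consistency of a finite family of bags. -/
def GloballyConsistent {D : A → Type} {m : ℕ} (X : Fin m → Finset A)
    (R : ∀ i, Bag D (X i)) : Prop :=
  ∃ T : Bag D (Finset.univ.sup X),
    ∀ i, Bag.marginal (Finset.le_sup (Finset.mem_univ i)) T = R i

instance {D : A → Type} [∀ a, Fintype (D a)] {X : Finset A} : Fintype (Tup D X) :=
  inferInstanceAs (Fintype (∀ a : X, D a.1))
instance {D : A → Type} [∀ a, DecidableEq (D a)] {X : Finset A} : DecidableEq (Tup D X) :=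
  inferInstanceAs (DecidableEq (∀ a : X, D a.1))
noncomputable def bagOf {D : A → Type} {X : Finset A} (S : Finset (Tup D X)) : Bag D X :=
  ∑ f ∈ S, Finsupp.single f 1

lemma bagOf_apply {D : A → Type} {X : Finset A} [DecidableEq (Tup D X)]
    (S : Finset (Tup D X)) (t : Tup D X) :
    bagOf S t = if t ∈ S then 1 else 0 := by
  classical
  rw [bagOf, Finset.sum_apply']
  simp only [Finsupp.single_apply]
  rw [Finset.sum_ite_eq' S t (fun _ => 1)]

lemma mapDomain_bagOf_apply {D : A → Type} {X : Finset A} {γ : Type} [DecidableEq γ]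
    (r : Tup D X → γ) (S : Finset (Tup D X)) (y : γ) :
    Finsupp.mapDomain r (bagOf S) y = (S.filter (fun f => r f = y)).card := by
  classical
  rw [bagOf, Finsupp.mapDomain_finset_sum]
  simp only [Finsupp.mapDomain_single]
  rw [Finset.sum_apply']
  rw [Finset.card_filter]
  exact Finset.sum_congr rfl fun f _ => by rw [Finsupp.single_apply]

lemma mapDomain_apply_eval {α γ : Type} [DecidableEq γ] (f : α → γ) (v : α →₀ ℕ) (b : γ) :
    Finsupp.mapDomain f v b = ∑ x ∈ v.support, if f x = b then v x else 0 := by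
  classical
  rw [Finsupp.mapDomain, Finsupp.sum_apply, Finsupp.sum]
  exact Finset.sum_congr rfl fun x _ => by rw [Finsupp.single_apply]

lemma le_mapDomain {α γ : Type} (f : α → γ) (v : α →₀ ℕ) (a : α) :
    v a ≤ Finsupp.mapDomain f v (f a) := by
  classical
  rw [mapDomain_apply_eval]
  by_cases h : a ∈ v.support
  · refine le_trans ?_ (Finset.single_le_sum (f := fun x => if f x = f a then v x else 0)
      (fun _ _ => by positivity) h)
    simp
  · simp [Finsupp.notMem_support_iff.mp h]

namespace Stmt8
variable {m : ℕ}

abbrev ZT (m : ℕ) (X : Finset (Fin (m+3))) : Type := Tup (fun _ : Fin (m+3) => Fin (m+2)) X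

def sumT {X : Finset (Fin (m+3))} (f : ZT m X) : Fin (m+2) := ∑ a ∈ X.attach, f a

noncomputable def zbag (X : Finset (Fin (m+3))) (c : Fin (m+2)) :
    Bag (fun _ : Fin (m+3) => Fin (m+2)) X :=
  bagOf (Finset.univ.filter (fun f : ZT m X => sumT f = c))

lemma sumT_restrict {X s : Finset (Fin (m+3))} (hs : s ⊆ X) (x : ZT m X) :
    sumT (Tup.restrict hs x) = ∑ b ∈ s, (if h : b ∈ X then x ⟨b, h⟩ else 0) := by
  rw [← Finset.sum_attach s (fun b => if h : b ∈ X then x ⟨b, h⟩ else 0)]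
  exact Finset.sum_congr rfl fun a _ => by rw [dif_pos (hs a.2)]; rfl

lemma sumT_eq {X : Finset (Fin (m+3))} (x : ZT m X) :
    sumT x = ∑ b ∈ X, (if h : b ∈ X then x ⟨b, h⟩ else 0) := by
  rw [← Finset.sum_attach X (fun b => if h : b ∈ X then x ⟨b, h⟩ else 0)]
  exact Finset.sum_congr rfl fun a _ => by rw [dif_pos a.2]

lemma CL (i j : Fin (m+3)) (c : Fin (m+3) → Fin (m+2)) (X : Finset (Fin (m+3)))
    (hi : Finset.univ.erase i ⊆ X) (hj : Finset.univ.erase j ⊆ X)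
    (hX : X ⊆ Finset.univ.erase i ∪ Finset.univ.erase j) :
    Finsupp.mapDomain (Tup.restrict hi)
      (bagOf (Finset.univ.filter (fun f : ZT m X =>
        sumT (Tup.restrict hi f) = c i ∧ sumT (Tup.restrict hj f) = c j)))
    = zbag (Finset.univ.erase i) (c i) := by
  classical
  ext g
  rw [mapDomain_bagOf_apply, zbag, bagOf_apply]
  simp only [Finset.mem_filter, Finset.mem_univ, true_and, Finset.filter_filter]
  -- total extension of g by zero
  set G : Fin (m+3) → Fin (m+2) :=
    fun b => if h : b ∈ Finset.univ.erase i then g ⟨b, h⟩ else 0 with hG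
  set w : Fin (m+2) := c j - ∑ b ∈ (Finset.univ.erase j).erase i, G b with hw
  have hsumg : sumT g = ∑ b ∈ Finset.univ.erase i, G b := sumT_eq g
  by_cases hsum : sumT g = c i
  · rw [if_pos hsum]
    -- the unique preimage
    set f₀ : ZT m X := fun a =>
      if h : a.1 ∈ Finset.univ.erase i then g ⟨a.1, h⟩ else w with hf₀
    have hre : Tup.restrict hi f₀ = g := by
      funext a
      show f₀ ⟨a.1, hi a.2⟩ = g a
      rw [hf₀]
      exact dif_pos a.2
    have hGmem : ∀ b ∈ (Finset.univ.erase j).erase i,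
        (if h : b ∈ Finset.univ.erase i then g ⟨b, h⟩ else w) = G b := by
      intro b hb
      have hbi : b ∈ Finset.univ.erase i :=
        Finset.mem_erase.2 ⟨(Finset.mem_erase.1 hb).1, Finset.mem_univ b⟩
      rw [dif_pos hbi]
      simp only [hG]
      rw [dif_pos hbi]
    have hcond2 : sumT (Tup.restrict hj f₀) = c j := by
      rw [sumT_restrict hj f₀]
      have step : ∀ b ∈ Finset.univ.erase j,
          (if h : b ∈ X then f₀ ⟨b, h⟩ else 0)
            = (if h : b ∈ Finset.univ.erase i then g ⟨b, h⟩ else w) := by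
        intro b hb
        rw [dif_pos (hj hb)]
      rw [Finset.sum_congr rfl step]
      by_cases hij : i = j
      · subst hij
        have step2 : ∀ b ∈ Finset.univ.erase i,
            (if h : b ∈ Finset.univ.erase i then g ⟨b, h⟩ else w) = G b := by
          intro b hb
          rw [dif_pos hb]
          simp only [hG]
          rw [dif_pos hb]
        rw [Finset.sum_congr rfl step2, ← hsumg, hsum]
      · have hij' : i ∈ Finset.univ.erase j :=
          Finset.mem_erase.2 ⟨hij, Finset.mem_univ i⟩
        rw [← Finset.add_sum_erase _ _ hij', dif_neg (Finset.notMem_erase i _),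
          Finset.sum_congr rfl hGmem, hw]
        exact sub_add_cancel _ _
    have hmem : f₀ ∈ Finset.univ.filter (fun f : ZT m X =>
        (sumT (Tup.restrict hi f) = c i ∧ sumT (Tup.restrict hj f) = c j)
          ∧ Tup.restrict hi f = g) := by
      rw [Finset.mem_filter]
      exact ⟨Finset.mem_univ _, ⟨⟨by rw [hre]; exact hsum, hcond2⟩, hre⟩⟩
    have huniq : ∀ x ∈ Finset.univ.filter (fun f : ZT m X =>
        (sumT (Tup.restrict hi f) = c i ∧ sumT (Tup.restrict hj f) = c j)
          ∧ Tup.restrict hi f = g), x = f₀ := by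
      intro x hx
      rw [Finset.mem_filter] at hx
      obtain ⟨-, ⟨-, hc2⟩, hrx⟩ := hx
      have hxg : ∀ (b : Fin (m+3)) (hb : b ∈ Finset.univ.erase i),
          x ⟨b, hi hb⟩ = g ⟨b, hb⟩ := by
        intro b hb
        calc x ⟨b, hi hb⟩ = (Tup.restrict hi x) ⟨b, hb⟩ := rfl
        _ = g ⟨b, hb⟩ := by rw [hrx]
      funext a
      by_cases ha : a.1 ∈ Finset.univ.erase i
      · calc x a = x ⟨a.1, hi ha⟩ := rfl
        _ = g ⟨a.1, ha⟩ := hxg a.1 ha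
        _ = f₀ a := by simp only [hf₀]; rw [dif_pos ha]
      · have hai : a.1 = i := by
          by_contra h
          exact ha (Finset.mem_erase.2 ⟨h, Finset.mem_univ _⟩)
        have hiX : i ∈ X := hai ▸ a.2
        have hij' : i ∈ Finset.univ.erase j := by
          rcases Finset.mem_union.1 (hX hiX) with h | h
          · exact absurd h (Finset.notMem_erase i _)
          · exact h
        rw [sumT_restrict hj x, ← Finset.add_sum_erase _ _ hij', dif_pos hiX] at hc2
        have hrest : ∀ b ∈ (Finset.univ.erase j).erase i,
            (if h : b ∈ X then x ⟨b, h⟩ else 0) = G b := by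
          intro b hb
          have hbi : b ∈ Finset.univ.erase i :=
            Finset.mem_erase.2 ⟨(Finset.mem_erase.1 hb).1, Finset.mem_univ b⟩
          rw [dif_pos (hi hbi)]
          simp only [hG]
          rw [dif_pos hbi]
          exact hxg b hbi
        rw [Finset.sum_congr rfl hrest] at hc2
        have hxw : x ⟨i, hiX⟩ = w := by rw [hw]; exact eq_sub_of_add_eq hc2
        have haeq : a = (⟨i, hiX⟩ : { y // y ∈ X }) := Subtype.ext hai
        calc x a = x ⟨i, hiX⟩ := by rw [haeq]
        _ = w := hxw
        _ = f₀ a := by simp only [hf₀]; rw [dif_neg ha]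
    rw [Finset.eq_singleton_iff_unique_mem.2 ⟨hmem, huniq⟩, Finset.card_singleton]
  · rw [if_neg hsum]
    have hempty : (Finset.univ.filter (fun f : ZT m X =>
        (sumT (Tup.restrict hi f) = c i ∧ sumT (Tup.restrict hj f) = c j)
          ∧ Tup.restrict hi f = g)) = ∅ := by
      rw [Finset.filter_eq_empty_iff]
      rintro x -
      rintro ⟨⟨h1, -⟩, hr⟩
      exact hsum (by rw [← hr]; exact h1)
    rw [hempty, Finset.card_empty]
end Stmt8
-- continuing namespace Stmt8 (appended for test)
namespace Stmt8
variable {m : ℕ}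

lemma support_bagOf_subset {D : A → Type} {X : Finset A} [DecidableEq (Tup D X)]
    (S : Finset (Tup D X)) : (bagOf S).support ⊆ S := by
  intro t ht
  rw [Finsupp.mem_support_iff, bagOf_apply] at ht
  by_contra h
  rw [if_neg h] at ht
  exact ht rfl

lemma mem_erase_pick (a : Fin (m+3)) :
    a ∈ Finset.univ.erase (if a = 0 then (1 : Fin (m+3)) else 0) := by
  refine Finset.mem_erase.2 ⟨?_, Finset.mem_univ a⟩
  by_cases h : a = 0
  · subst h
    rw [if_pos rfl]
    simp [Fin.ext_iff]
  · rw [if_neg h]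
    exact h

def embT (D : Fin (m+3) → Type) (e : ∀ a : Fin (m+3), Fin (m+2) ↪ D a)
    {X : Finset (Fin (m+3))} (f : ZT m X) : Tup D X := fun a => e a.1 (f a)

lemma embT_injective (D : Fin (m+3) → Type) (e : ∀ a, Fin (m+2) ↪ D a)
    (X : Finset (Fin (m+3))) : Function.Injective (embT D e (X := X)) := by
  intro f g h
  funext a
  exact (e a.1).injective (congrFun h a)

lemma marginal_mapDomain_embT (D : Fin (m+3) → Type) (e : ∀ a, Fin (m+2) ↪ D a)
    {X Z : Finset (Fin (m+3))} (h : Z ⊆ X) (B : Bag (fun _ : Fin (m+3) => Fin (m+2)) X) :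
    Bag.marginal h (Finsupp.mapDomain (embT D e) B)
      = Finsupp.mapDomain (embT D e) (Bag.marginal h B) := by
  rw [Bag.marginal, Bag.marginal, ← Finsupp.mapDomain_comp, ← Finsupp.mapDomain_comp]
  rfl

end Stmt8

open Stmt8

/-- for every `n ≥ 3`, the hypergraph `H_n` with vertices `V_n = {A_1, …, A_n}`
(each with domain containing `{0, 1, …, n-2}`) and hyperedges `V_n ∖ {A_i}` for `1 ≤ i ≤ n`
does not have the local-to-global consistency property for bags: some pairwise consistent
collection of bags over its hyperedges is not globally consistent.  (Here `n = m + 3`, so that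
all `n ≥ 3` are covered; the vertices are the elements of `Fin (m+3)`, the hyperedges are the
complements of singletons, and `{0, …, n-2}` is represented by `Fin (m+2)`.) -/
theorem stmt8 (m : ℕ) (D : Fin (m + 3) → Type) (e : ∀ a : Fin (m + 3), Fin (m + 2) ↪ D a) :
    ∃ R : ∀ i : Fin (m + 3), Bag D (Finset.univ.erase i),
      (∀ i j, Consistent (R i) (R j)) ∧
      ¬ GloballyConsistent (fun i : Fin (m + 3) => Finset.univ.erase i) R := by
  classical
  set c : Fin (m+3) → Fin (m+2) := fun i => if i = 0 then 1 else 0 with hc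
  refine ⟨fun i => Finsupp.mapDomain (embT D e) (zbag (Finset.univ.erase i) (c i)),
    fun i j => ?_, ?_⟩
  · -- pairwise consistency
    refine ⟨Finsupp.mapDomain (embT D e)
      (bagOf (Finset.univ.filter
        (fun f : ZT m (Finset.univ.erase i ∪ Finset.univ.erase j) =>
          sumT (Tup.restrict Finset.subset_union_left f) = c i ∧
          sumT (Tup.restrict Finset.subset_union_right f) = c j))), ?_, ?_⟩
    · rw [marginal_mapDomain_embT]
      congr 1
      exact CL i j c _ Finset.subset_union_left Finset.subset_union_right subset_rfl
    · rw [marginal_mapDomain_embT]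
      congr 1
      have h2 := CL j i c (Finset.univ.erase i ∪ Finset.univ.erase j)
        Finset.subset_union_right Finset.subset_union_left
        (Finset.union_subset Finset.subset_union_right Finset.subset_union_left)
      have hSS : (Finset.univ.filter
          (fun f : ZT m (Finset.univ.erase i ∪ Finset.univ.erase j) =>
            sumT (Tup.restrict Finset.subset_union_left f) = c i ∧
            sumT (Tup.restrict Finset.subset_union_right f) = c j))
        = (Finset.univ.filter
          (fun f : ZT m (Finset.univ.erase i ∪ Finset.univ.erase j) =>
            sumT (Tup.restrict Finset.subset_union_right f) = c j ∧
            sumT (Tup.restrict Finset.subset_union_left f) = c i)) := by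
        ext f
        simp only [Finset.mem_filter, Finset.mem_univ, true_and]
        exact and_comm
      rw [hSS]
      exact h2
  · -- not globally consistent
    rintro ⟨T, hT⟩
    have hsub : ∀ i : Fin (m+3), Finset.univ.erase i ⊆
        Finset.univ.sup (fun i : Fin (m+3) => Finset.univ.erase i) :=
      fun i => Finset.le_sup (Finset.mem_univ i)
    -- step 1: T has empty support
    have hsupp : ∀ t, t ∉ T.support := by
      intro t ht
      have hnz : ∀ i : Fin (m+3),
          Finsupp.mapDomain (embT D e) (zbag (Finset.univ.erase i) (c i))
            (Tup.restrict (Finset.le_sup (Finset.mem_univ i)) t) ≠ 0 := by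
        intro i
        have hTi : Bag.marginal (Finset.le_sup (Finset.mem_univ i)) T
            = Finsupp.mapDomain (embT D e) (zbag (Finset.univ.erase i) (c i)) := hT i
        rw [← hTi]
        intro h0
        rw [Bag.marginal] at h0
        have h1 := le_mapDomain (Tup.restrict (Finset.le_sup (Finset.mem_univ i))) T t
        rw [h0] at h1
        exact Finsupp.mem_support_iff.1 ht (Nat.le_zero.1 h1)
      have hex : ∀ i : Fin (m+3), ∃ gz : ZT m (Finset.univ.erase i),
          sumT gz = c i ∧ embT D e gz = Tup.restrict (Finset.le_sup (Finset.mem_univ i)) t := by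
        intro i
        have := Finsupp.mem_support_iff.2 (hnz i)
        have hmem := Finsupp.mapDomain_support this
        rw [Finset.mem_image] at hmem
        obtain ⟨gz, hgz, hge⟩ := hmem
        have := support_bagOf_subset _ hgz
        rw [Finset.mem_filter] at this
        exact ⟨gz, this.2, hge⟩
      choose gz hgz hemb using hex
      set v : Fin (m+3) → Fin (m+2) :=
        fun a => gz (if a = 0 then 1 else 0) ⟨a, mem_erase_pick a⟩ with hv
      have coher : ∀ (i : Fin (m+3)) (a : Fin (m+3)) (ha : a ∈ Finset.univ.erase i),
          gz i ⟨a, ha⟩ = v a := by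
        intro i a ha
        apply (e a).injective
        calc e a (gz i ⟨a, ha⟩) = embT D e (gz i) ⟨a, ha⟩ := rfl
        _ = (Tup.restrict (Finset.le_sup (Finset.mem_univ i)) t) ⟨a, ha⟩ := by rw [hemb i]
        _ = t ⟨a, hsub i ha⟩ := rfl
        _ = (Tup.restrict (Finset.le_sup (Finset.mem_univ (if a = 0 then (1 : Fin (m+3)) else 0))) t)
              ⟨a, mem_erase_pick a⟩ := rfl
        _ = embT D e (gz (if a = 0 then 1 else 0)) ⟨a, mem_erase_pick a⟩ := by
              rw [hemb (if a = 0 then 1 else 0)]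
        _ = e a (v a) := rfl
      have key : ∀ i : Fin (m+3), ∑ a ∈ Finset.univ.erase i, v a = c i := by
        intro i
        calc ∑ a ∈ Finset.univ.erase i, v a
            = ∑ a ∈ (Finset.univ.erase i).attach, v a.1 :=
              (Finset.sum_attach _ v).symm
        _ = ∑ a ∈ (Finset.univ.erase i).attach, gz i a :=
              Finset.sum_congr rfl fun a _ => (coher i a.1 a.2).symm
        _ = sumT (gz i) := rfl
        _ = c i := hgz i
      -- arithmetic contradiction
      have hsum1 : ∑ i : Fin (m+3), c i = 1 := by
        rw [hc]
        rw [Finset.sum_ite_eq' Finset.univ (0 : Fin (m+3)) (fun _ => (1 : Fin (m+2)))]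
        rw [if_pos (Finset.mem_univ _)]
      have hbig : ∑ i : Fin (m+3), ∑ a ∈ Finset.univ.erase i, v a = 1 := by
        rw [Finset.sum_congr rfl fun i _ => key i]
        exact hsum1
      have hsplit : ∀ i : Fin (m+3), ∑ a ∈ Finset.univ.erase i, v a
          = (∑ a : Fin (m+3), v a) - v i :=
        fun i => Finset.sum_erase_eq_sub (Finset.mem_univ i)
      rw [Finset.sum_congr rfl fun i _ => hsplit i, Finset.sum_sub_distrib,
        Finset.sum_const, Finset.card_univ, Fintype.card_fin] at hbig
      have : (m+2) • (∑ a : Fin (m+3), v a) = 1 := by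
        have : (m+3) • (∑ a : Fin (m+3), v a)
            = (m+2) • (∑ a : Fin (m+3), v a) + ∑ a : Fin (m+3), v a := succ_nsmul _ _
        rw [this] at hbig
        rw [← hbig]
        exact (add_sub_cancel_right _ _).symm
      have h0 : (m+2) • (∑ a : Fin (m+3), v a) = 0 := by
        have h0' := card_nsmul_eq_zero (G := Fin (m+2)) (x := ∑ a : Fin (m+3), v a)
        rwa [Fintype.card_fin] at h0'
      rw [h0] at this
      exact absurd this zero_ne_one
    -- step 2: contradiction with R 0 ≠ 0
    have hT0 : T = 0 := by
      rw [← Finsupp.support_eq_empty]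
      exact Finset.eq_empty_of_forall_notMem hsupp
    have hR0 : Bag.marginal (Finset.le_sup (Finset.mem_univ (0 : Fin (m+3)))) T
        = Finsupp.mapDomain (embT D e)
            (zbag (Finset.univ.erase (0 : Fin (m+3))) (c 0)) := hT 0
    rw [hT0, Bag.marginal, Finsupp.mapDomain_zero] at hR0
    set g₀ : ZT m (Finset.univ.erase (0 : Fin (m+3))) :=
      fun a => if a.1 = 1 then 1 else 0 with hg₀
    have hsum₀ : sumT g₀ = c 0 := by
      rw [hc]
      simp only [if_pos rfl]
      calc sumT g₀ = ∑ a ∈ (Finset.univ.erase (0 : Fin (m+3))).attach,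
            (fun b => if b = 1 then (1 : Fin (m+2)) else 0) a.1 := rfl
      _ = ∑ b ∈ Finset.univ.erase (0 : Fin (m+3)),
            (if b = 1 then (1 : Fin (m+2)) else 0) :=
          Finset.sum_attach (Finset.univ.erase (0 : Fin (m+3)))
            (fun b => if b = 1 then (1 : Fin (m+2)) else 0)
      _ = 1 := by
          rw [Finset.sum_ite_eq' (Finset.univ.erase (0 : Fin (m+3))) (1 : Fin (m+3))
            (fun _ => (1 : Fin (m+2)))]
          rw [if_pos (Finset.mem_erase.2 ⟨by simp [Fin.ext_iff], Finset.mem_univ _⟩)]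
    have hmem : g₀ ∈ Finset.univ.filter
        (fun f : ZT m (Finset.univ.erase (0 : Fin (m+3))) => sumT f = c 0) :=
      Finset.mem_filter.2 ⟨Finset.mem_univ _, hsum₀⟩
    have : (0 : Bag D (Finset.univ.erase (0 : Fin (m+3)))) (embT D e g₀) = 1 := by
      rw [hR0, Finsupp.mapDomain_apply (embT_injective D e _), zbag, bagOf_apply,
        if_pos hmem]
    simp at this
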